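/- Consider N jointly Gaussian mean-zero outputs with covariance built from Q latent white-noise functions via kernels K_{qi}, i.e., cov_{ij}(t) = ∑_{q=1}^Q ∫ K_{qi}(u) K_{qj}(u − t) du, where each K_{qi} is of the form α_{qi} k_{qi} with k_{qi} > 0 integrable. Suppose the index set {1,…,N} is partitioned into M nonempty classes and we require cov_{ij} ≡ 0 whenever i, j lie in different classes while each cov_{ii} is not identically zero. Then necessarily Q ≥ M. -/

import Mathlib

open MeasureTheory BigOperators Finset

section Aux

open Convolution

/-- Fubini for the convolution-type integral: integrating the cross-correlation
over the shift gives the product of the integrals. -/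
lemma integral_integral_shift {f g : ℝ → ℝ} (hf : Integrable f) (hg : Integrable g) :
    ∫ t : ℝ, ∫ u : ℝ, f u * g (u - t) = (∫ u, f u) * (∫ u, g u) := by
  have hg' : Integrable (fun x : ℝ => g (-x)) := hg.comp_neg
  have hconv :
      (fun t : ℝ => ∫ u : ℝ, f u * g (u - t))
        = (f ⋆[ContinuousLinearMap.mul ℝ ℝ, volume] fun x => g (-x)) := by
    funext t
    simp only [convolution_def, ContinuousLinearMap.mul_apply']
    congr 1
    funext u
    congr 1
    ring_nf
  rw [hconv, integral_convolution (ContinuousLinearMap.mul ℝ ℝ) hf hg']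
  simp only [ContinuousLinearMap.mul_apply']
  rw [integral_neg_eq_self]

/-- Integrability in the shift variable of the cross-correlation. -/
lemma integrable_integral_shift {f g : ℝ → ℝ} (hf : Integrable f) (hg : Integrable g) :
    Integrable (fun t : ℝ => ∫ u : ℝ, f u * g (u - t)) := by
  have hconv :
      (fun t : ℝ => ∫ u : ℝ, f u * g (u - t))
        = (f ⋆[ContinuousLinearMap.mul ℝ ℝ, volume] fun x => g (-x)) := by
    funext t
    simp only [convolution_def, ContinuousLinearMap.mul_apply']
    congr 1
    funext u
    congr 1
    ring_nf
  rw [hconv]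
  exact hf.integrable_convolution _ hg.comp_neg

end Aux

/-- Theorem 1 (necessity): in the convolution construction with kernels
K_{qi} = α_{qi} k_{qi}, k_{qi} > 0 integrable, if the outputs split into M classes
(given by a surjection c : Fin N → Fin M) with identically zero cross-covariance
between different classes and non-degenerate own covariances, then Q ≥ M. -/
theorem latent_functions_necessary {N M Q : ℕ}
    (k : Fin Q → Fin N → ℝ → ℝ) (α : Fin Q → Fin N → ℝ)
    (hkpos : ∀ q i x, 0 < k q i x)
    (hkint : ∀ q i, Integrable (k q i))
    (hconv : ∀ q i j (t : ℝ), Integrable (fun u => k q i u * k q j (u - t)))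
    (c : Fin N → Fin M) (hc : Function.Surjective c)
    (hcross : ∀ i j, c i ≠ c j → ∀ t : ℝ,
      (∑ q, ∫ u, (α q i * k q i u) * (α q j * k q j (u - t))) = 0)
    (hdiag : ∀ i, ¬ (∀ t : ℝ,
      (∑ q, ∫ u, (α q i * k q i u) * (α q i * k q i (u - t))) = 0)) :
    M ≤ Q := by
  classical
  -- the total mass of each kernel is positive
  set I : Fin Q → Fin N → ℝ := fun q i => ∫ u, k q i u with hI
  have hIpos : ∀ q i, 0 < I q i := by
    intro q i
    rw [hI]
    rw [integral_pos_iff_support_of_nonneg (fun x => (hkpos q i x).le) (hkint q i)]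
    have : Function.support (k q i) = Set.univ := by
      ext x; simp [Function.support, (hkpos q i x).ne']
    rw [this]
    simp
  -- each output uses some latent function
  have hα : ∀ i, ∃ q, α q i ≠ 0 := by
    intro i
    by_contra h
    push_neg at h
    exact hdiag i (fun t => by
      refine Finset.sum_eq_zero fun q _ => ?_
      simp [h q])
  -- pick class representatives
  choose rep hrep using hc
  -- the vectors of weighted masses
  set v : Fin M → EuclideanSpace ℝ (Fin Q) :=
    fun m => WithLp.toLp 2 (fun q => α q (rep m) * I q (rep m)) with hv
  have hvne : ∀ m, v m ≠ 0 := by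
    intro m h
    obtain ⟨q, hq⟩ := hα (rep m)
    have := congrArg (fun x => x q) h
    simp only [hv, PiLp.zero_apply, PiLp.toLp_apply] at this
    exact hq (by
      rcases mul_eq_zero.1 this with h' | h'
      · exact h'
      · exact absurd h' (hIpos q (rep m)).ne')
  -- orthogonality of the representatives' vectors
  have horth : Pairwise fun m m' => (inner ℝ (v m) (v m') : ℝ) = 0 := by
    intro m m' hmm'
    have hcc : c (rep m) ≠ c (rep m') := by
      rw [hrep m, hrep m']; exact hmm'
    have hz := hcross (rep m) (rep m') hcc
    -- each summand as a function of t is integrable with integral α α I I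
    have key : ∀ q : Fin Q,
        ∫ t : ℝ, ∫ u, (α q (rep m) * k q (rep m) u) * (α q (rep m') * k q (rep m') (u - t))
          = (α q (rep m) * I q (rep m)) * (α q (rep m') * I q (rep m')) := by
      intro q
      have : (fun t : ℝ => ∫ u,
          (α q (rep m) * k q (rep m) u) * (α q (rep m') * k q (rep m') (u - t)))
          = fun t : ℝ => (α q (rep m) * α q (rep m')) *
              ∫ u, k q (rep m) u * k q (rep m') (u - t) := by
        funext t
        rw [← integral_const_mul]
        congr 1; funext u; ring
      rw [this]
      rw [integral_const_mul, integral_integral_shift (hkint q (rep m)) (hkint q (rep m'))]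
      simp only [hI]
      ring
    -- integrability of each summand in t
    have hint : ∀ q : Fin Q, Integrable (fun t : ℝ =>
        ∫ u, (α q (rep m) * k q (rep m) u) * (α q (rep m') * k q (rep m') (u - t))) := by
      intro q
      have : (fun t : ℝ => ∫ u,
          (α q (rep m) * k q (rep m) u) * (α q (rep m') * k q (rep m') (u - t)))
          = fun t : ℝ => (α q (rep m) * α q (rep m')) *
              ∫ u, k q (rep m) u * k q (rep m') (u - t) := by
        funext t
        rw [← integral_const_mul]
        congr 1; funext u; ring
      rw [this]
      exact (integrable_integral_shift (hkint q (rep m)) (hkint q (rep m'))).const_mul _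
    -- integrate the vanishing cross-covariance over t
    have h0 : ∑ q, (α q (rep m) * I q (rep m)) * (α q (rep m') * I q (rep m')) = 0 := by
      have := integral_finset_sum (μ := (volume : Measure ℝ)) Finset.univ
        (f := fun q (t : ℝ) =>
          ∫ u, (α q (rep m) * k q (rep m) u) * (α q (rep m') * k q (rep m') (u - t)))
        (fun q _ => hint q)
      simp only [key] at this
      rw [← this]
      have hz' : (fun t : ℝ => ∑ q, ∫ u,
          (α q (rep m) * k q (rep m) u) * (α q (rep m') * k q (rep m') (u - t)))
          = fun _ => (0 : ℝ) := funext hz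
      rw [hz', integral_zero]
    rw [PiLp.inner_apply, ← h0]
    refine Finset.sum_congr rfl fun q _ => ?_
    simp only [hv, PiLp.toLp_apply, RCLike.inner_apply, conj_trivial]
    ring
  have hli : LinearIndependent ℝ v :=
    linearIndependent_of_ne_zero_of_inner_eq_zero hvne horth
  have := hli.fintype_card_le_finrank
  simpa using this
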